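/- arXiv:1608.06931 — 2 statements merged into one kernel-verified Lean document; each statement's English description precedes it below -/
import Mathlib

section
/- Let σ be a permutation of size n, and let A, B ⊆ {1,…,n} be disjoint k-element sets with σ_⟨A⟩ = σ_⟨B⟩. Write f_A(1) < ⋯ < f_A(n−k) for the increasing enumeration of {1,…,n}∖A and f_B(1) < ⋯ < f_B(n−k) for that of {1,…,n}∖B, and for p ∈ {1,…,n} let δ(p) = |{a ∈ A : a < p}| − |{b ∈ B : b < p}|. If p ∉ A ∪ B and δ(p) = 0 (a fixed point), then for every index i with f_A(i) ≠ f_B(i), the position p does not lie strictly between f_A(i) and f_B(i), and the value σ(p) does not lie strictly between σ(f_A(i)) and σ(f_B(i)). -/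
open Finset

namespace Prolific

/-- The L¹ ("taxicab") distance between the `i`th and `j`th entries of `σ`. -/
def dperm {n : ℕ} (σ : Equiv.Perm (Fin n)) (i j : Fin n) : ℕ :=
  Nat.dist (i : ℕ) (j : ℕ) + Nat.dist (σ i : ℕ) (σ j : ℕ)

/-- The breadth of a permutation: the minimum distance between two distinct entries. -/
noncomputable def breadth {n : ℕ} (σ : Equiv.Perm (Fin n)) : ℕ :=
  sInf {d : ℕ | ∃ i j : Fin n, i ≠ j ∧ d = dperm σ i j}

/-- The pattern `σ_⟨A⟩` of `σ` obtained by deleting the entries in positions `A`. -/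
noncomputable def pattern {n m : ℕ} (σ : Equiv.Perm (Fin n)) (A : Finset (Fin n))
    (h : Aᶜ.card = m) : Equiv.Perm (Fin m) :=
  (Aᶜ.orderIsoOfFin h).toEquiv.trans
    (((Equiv.subtypeEquiv (σ : Equiv.Perm (Fin n)) (fun a => by
        constructor
        · exact fun ha => Finset.mem_image_of_mem σ ha
        · intro ha
          rcases Finset.mem_image.mp ha with ⟨x, hx, hxa⟩
          rwa [← σ.injective hxa])).trans
      ((Aᶜ.image σ).orderIsoOfFin
        (by rw [Finset.card_image_of_injective _ σ.injective, h])).toEquiv.symm))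

/-- `σ_⟨A⟩ = σ_⟨B⟩` (in particular the two patterns have the same size). -/
def PatternEq {n : ℕ} (σ : Equiv.Perm (Fin n)) (A B : Finset (Fin n)) : Prop :=
  ∃ (m : ℕ) (hA : Aᶜ.card = m) (hB : Bᶜ.card = m), pattern σ A hA = pattern σ B hB

/-- `σ` is `k`-prolific: distinct `k`-element sets of positions produce distinct patterns. -/
def IsProlific {n : ℕ} (k : ℕ) (σ : Equiv.Perm (Fin n)) : Prop :=
  ∀ A B : Finset (Fin n), A.card = k → B.card = k → A ≠ B → ¬ PatternEq σ A B


/-- The discrepancy `δ(p)`: the number of elements of `A` strictly to the left of `p`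
minus the number of elements of `B` strictly to the left of `p`. -/
def delta {n : ℕ} (A B : Finset (Fin n)) (p : Fin n) : ℤ :=
  ((A.filter fun a => a < p).card : ℤ) - ((B.filter fun b => b < p).card : ℤ)

/-- The index of an element of a finset under `orderIsoOfFin` is the number of smaller
elements of the finset. -/
theorem rank_eq {α : Type*} [LinearOrder α] (s : Finset α) {m : ℕ} (h : s.card = m)
    (i : Fin m) : (s.filter (· < (s.orderIsoOfFin h i : α))).card = i := by
  have himg : s.filter (· < (s.orderIsoOfFin h i : α)) =
      (Finset.Iio i).image (fun j => (s.orderIsoOfFin h j : α)) := by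
    ext x
    simp only [mem_filter, mem_image, Finset.mem_Iio]
    constructor
    · rintro ⟨hx, hlt⟩
      refine ⟨(s.orderIsoOfFin h).symm ⟨x, hx⟩, ?_, by simp⟩
      have := (s.orderIsoOfFin h).symm.lt_iff_lt.mpr
        (show (⟨x, hx⟩ : s) < s.orderIsoOfFin h i from Subtype.mk_lt_mk.mpr hlt)
      simpa using this
    · rintro ⟨j, hj, rfl⟩
      exact ⟨(s.orderIsoOfFin h j).2, Subtype.mk_lt_mk.mp ((s.orderIsoOfFin h).lt_iff_lt.mpr hj)⟩
  rw [himg, Finset.card_image_of_injective _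
    (fun a b hab => (s.orderIsoOfFin h).injective (Subtype.ext hab)), Fin.card_Iio]

/-- The pattern preserves the relative order of the retained values of `σ`. -/
theorem pattern_lt_iff {n m : ℕ} (σ : Equiv.Perm (Fin n)) (A : Finset (Fin n))
    (h : Aᶜ.card = m) (i j : Fin m) :
    pattern σ A h i < pattern σ A h j ↔
      σ (Aᶜ.orderIsoOfFin h i) < σ (Aᶜ.orderIsoOfFin h j) := by
  set T := (Aᶜ.image σ).orderIsoOfFin
        (by rw [Finset.card_image_of_injective _ σ.injective, h]) with hT
  have : ∀ x : (Aᶜ.image σ), T.toEquiv.symm x = T.symm x := fun x => rfl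
  simp only [pattern, Equiv.trans_apply, ← hT, this, T.symm.lt_iff_lt,
    Equiv.subtypeEquiv_apply, Subtype.mk_lt_mk]
  rfl

/-- A fixed point `p` (a point outside `A ∪ B` with `δ(p) = 0`) never lies, in position
or in value, strictly between the pair of points fulfilling a common entry of the two
equal patterns. -/
theorem fixed_point_not_between {n k : ℕ} (σ : Equiv.Perm (Fin n))
    (A B : Finset (Fin n)) (hAk : A.card = k) (hBk : B.card = k)
    (hdisj : Disjoint A B)
    (hA : Aᶜ.card = n - k) (hB : Bᶜ.card = n - k)
    (hpat : pattern σ A hA = pattern σ B hB)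
    (p : Fin n) (hpA : p ∉ A) (hpB : p ∉ B) (hδ : delta A B p = 0) :
    ∀ i : Fin (n - k),
      (Aᶜ.orderIsoOfFin hA i).1 ≠ (Bᶜ.orderIsoOfFin hB i).1 →
      ¬(((Aᶜ.orderIsoOfFin hA i).1 < p ∧ p < (Bᶜ.orderIsoOfFin hB i).1) ∨
        ((Bᶜ.orderIsoOfFin hB i).1 < p ∧ p < (Aᶜ.orderIsoOfFin hA i).1)) ∧
      ¬((σ (Aᶜ.orderIsoOfFin hA i).1 < σ p ∧ σ p < σ (Bᶜ.orderIsoOfFin hB i).1) ∨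
        (σ (Bᶜ.orderIsoOfFin hB i).1 < σ p ∧ σ p < σ (Aᶜ.orderIsoOfFin hA i).1)) := by
  intro i hne
  have hpAc : p ∈ Aᶜ := Finset.mem_compl.mpr hpA
  have hpBc : p ∈ Bᶜ := Finset.mem_compl.mpr hpB
  set eA := Aᶜ.orderIsoOfFin hA with heAdef
  set eB := Bᶜ.orderIsoOfFin hB with heBdef
  set iA : Fin (n - k) := eA.symm ⟨p, hpAc⟩ with hiAdef
  set iB : Fin (n - k) := eB.symm ⟨p, hpBc⟩ with hiBdef
  have heA : (eA iA : Fin n) = p := by rw [hiAdef, OrderIso.apply_symm_apply]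
  have heB : (eB iB : Fin n) = p := by rw [hiBdef, OrderIso.apply_symm_apply]
  -- counting: iA = iB
  have hsum : ∀ S : Finset (Fin n),
      (Sᶜ.filter (· < p)).card + (S.filter (· < p)).card = (univ.filter (· < p)).card := by
    intro S
    rw [← Finset.card_union_of_disjoint
      (Finset.disjoint_filter_filter disjoint_compl_left), ← Finset.filter_union,
      show Sᶜ ∪ S = univ from by rw [Finset.union_comm]; exact Finset.union_compl S]
  have hδ' : (A.filter (· < p)).card = (B.filter (· < p)).card := by
    unfold delta at hδ; omega
  have hranksA : (Aᶜ.filter (· < p)).card = (iA : ℕ) := by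
    have := rank_eq Aᶜ hA iA
    rwa [← heAdef, heA] at this
  have hranksB : (Bᶜ.filter (· < p)).card = (iB : ℕ) := by
    have := rank_eq Bᶜ hB iB
    rwa [← heBdef, heB] at this
  have hiAB : iA = iB := by
    have h1 := hsum A
    have h2 := hsum B
    exact Fin.ext (by omega)
  have hiiA : i ≠ iA := by
    rintro rfl
    exact hne (by rw [heA, hiAB, heB])
  -- position part
  constructor
  · rcases lt_trichotomy i iA with h | h | h
    · have h1 : (eA i : Fin n) < p := heA ▸ Subtype.mk_lt_mk.mp (eA.lt_iff_lt.mpr h)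
      have h2 : (eB i : Fin n) < p := heB ▸ Subtype.mk_lt_mk.mp (eB.lt_iff_lt.mpr (hiAB ▸ h))
      rintro (⟨-, hc⟩ | ⟨-, hc⟩)
      · exact absurd hc (not_lt.mpr h2.le)
      · exact absurd hc (not_lt.mpr h1.le)
    · exact absurd h hiiA
    · have h1 : p < (eA i : Fin n) := heA ▸ Subtype.mk_lt_mk.mp (eA.lt_iff_lt.mpr h)
      have h2 : p < (eB i : Fin n) := heB ▸ Subtype.mk_lt_mk.mp (eB.lt_iff_lt.mpr (hiAB ▸ h))
      rintro (⟨hc, -⟩ | ⟨hc, -⟩)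
      · exact absurd hc (not_lt.mpr h1.le)
      · exact absurd hc (not_lt.mpr h2.le)
  -- value part
  · have hkey : σ (eA i : Fin n) < σ p ↔ σ (eB i : Fin n) < σ p := by
      have t1 := pattern_lt_iff σ A hA i iA
      have t2 := pattern_lt_iff σ B hB i iB
      rw [hpat] at t1
      rw [← heAdef, heA] at t1
      rw [← heBdef, heB] at t2
      rw [← t1, hiAB, t2]
    have hnep : (eA i : Fin n) ≠ p := by
      intro hc
      exact hiiA (eA.injective (Subtype.ext (hc.trans heA.symm)))
    rcases lt_trichotomy (σ (eA i : Fin n)) (σ p) with h | h | h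
    · have h2 := hkey.mp h
      rintro (⟨-, hc⟩ | ⟨-, hc⟩)
      · exact absurd hc (not_lt.mpr h2.le)
      · exact absurd hc (not_lt.mpr h.le)
    · exact absurd (σ.injective h) hnep
    · have hnepB : (eB i : Fin n) ≠ p := by
        intro hc
        exact hiiA (hiAB ▸ eB.injective (Subtype.ext (hc.trans heB.symm)))
      have h2 : σ p < σ (eB i : Fin n) := by
        rcases lt_trichotomy (σ (eB i : Fin n)) (σ p) with hlt | heq | hgt
        · exact absurd (hkey.mpr hlt) (not_lt.mpr h.le)
        · exact absurd (σ.injective heq) hnepB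
        · exact hgt
      rintro (⟨hc, -⟩ | ⟨hc, -⟩)
      · exact absurd hc (not_lt.mpr h.le)
      · exact absurd hc (not_lt.mpr h2.le)

end Prolific
end

section
/- Let k ≥ 2 be even, let m = k²/2 + 2k + 1, and let σ_k be the permutation of {1,…,m} given by σ_k(i) = i(k+1) mod (m+1). Then for all distinct i, j ∈ {1,…,m}, |i−j| + |σ_k(i)−σ_k(j)| ≥ k + 2 (i.e., br(σ_k) ≥ k+2); consequently σ_k is a k-prolific permutation of size k²/2 + 2k + 1. -/
open Finset

namespace Prolific

/-! ### Auxiliary lemmas -/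

lemma natdist_cast (a b : ℕ) : (Nat.dist a b : ℤ) = |(a:ℤ) - b| := by
  rcases le_total a b with h | h
  · rw [Nat.dist_eq_sub_of_le h, abs_sub_comm, abs_of_nonneg (sub_nonneg.mpr (Nat.cast_le.mpr h))]
    push_cast [h]; ring
  · rw [Nat.dist_eq_sub_of_le_right h, abs_of_nonneg (sub_nonneg.mpr (Nat.cast_le.mpr h))]
    push_cast [h]; ring

lemma sm_gap {N n : ℕ} {f : Fin N → Fin n} (hf : StrictMono f) (r : Fin N) (d : ℕ)
    (h : (r:ℕ) + d < N) : (f r : ℕ) + d ≤ (f ⟨(r:ℕ)+d, h⟩ : ℕ) := by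
  induction d with
  | zero => simp
  | succ d ih =>
    have h' : (r:ℕ) + d < N := by omega
    have h1 := ih h'
    have h2 : f ⟨(r:ℕ)+d, h'⟩ < f ⟨(r:ℕ)+d+1, h⟩ := hf (by simp [Fin.lt_def])
    have h3 := Fin.lt_def.mp h2
    have h4 : f ⟨(r:ℕ)+(d+1), h⟩ = f ⟨(r:ℕ)+d+1, h⟩ := rfl
    rw [h4]
    omega

lemma sm_le {N n : ℕ} {f : Fin N → Fin n} (hf : StrictMono f) (r : Fin N) :
    (r:ℕ) ≤ (f r : ℕ) := by
  have h0 : (0:ℕ) + (r:ℕ) < N := by simpa using r.isLt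
  have := sm_gap hf ⟨0, by omega⟩ (r:ℕ) h0
  have he : (⟨(0:ℕ)+(r:ℕ), h0⟩ : Fin N) = r := by ext; simp
  rw [he] at this
  omega

lemma sm_ub {N n : ℕ} {f : Fin N → Fin n} (hf : StrictMono f) (r : Fin N) :
    (f r : ℕ) + N ≤ n + (r:ℕ) := by
  have hN : 0 < N := Fin.pos r
  have h : (r:ℕ) + (N - 1 - (r:ℕ)) < N := by omega
  have := sm_gap hf r (N - 1 - (r:ℕ)) h
  have hlt := (f ⟨(r:ℕ) + (N - 1 - (r:ℕ)), h⟩).isLt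
  have := r.isLt
  omega

lemma sm_spread {N n : ℕ} {f g : Fin N → Fin n} (hf : StrictMono f) (hg : StrictMono g)
    (r r' : Fin N) :
    ((f r : ℕ):ℤ) - ((g r : ℕ):ℤ) - ((f r' : ℕ):ℤ) + ((g r' : ℕ):ℤ) ≤ (n:ℤ) - N := by
  rcases le_total (r:ℕ) (r':ℕ) with h | h
  · have h1 : (r:ℕ) + ((r':ℕ) - (r:ℕ)) < N := by have := r'.isLt; omega
    have h2 := sm_gap hf r ((r':ℕ) - (r:ℕ)) h1
    have he : (⟨(r:ℕ) + ((r':ℕ) - (r:ℕ)), h1⟩ : Fin N) = r' := by ext; simp; omega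
    rw [he] at h2
    have h3 := sm_le hg r
    have h4 := sm_ub hg r'
    omega
  · have h1 : (r':ℕ) + ((r:ℕ) - (r':ℕ)) < N := by have := r.isLt; omega
    have h2 := sm_gap hg r' ((r:ℕ) - (r':ℕ)) h1
    have he : (⟨(r':ℕ) + ((r:ℕ) - (r':ℕ)), h1⟩ : Fin N) = r := by ext; simp; omega
    rw [he] at h2
    have h3 := sm_le hf r'
    have h4 := sm_ub hf r
    omega

lemma breadth_arith (t d e c : ℤ) (ht : 1 ≤ t) (he : e = d*(2*t+1) - c*(2*(t+1)^2))
    (hd1 : 1 ≤ d) (hd2 : d ≤ 2*t^2+4*t) (he2 : |e| ≤ 2*t^2+4*t) :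
    2*t+2 ≤ d + |e| := by
  have he2' := abs_le.mp he2
  rcases le_or_gt (2*t+2) d with h | h
  · have := abs_nonneg e; linarith
  have hd3 : d ≤ 2*t+1 := by omega
  have hc0 : 0 ≤ c := by
    by_contra hc
    push_neg at hc
    have hc' : c ≤ -1 := by omega
    nlinarith [mul_le_mul_of_nonneg_right hc' (show (0:ℤ) ≤ 2*(t+1)^2 by positivity)]
  have hc2 : c ≤ 2 := by
    by_contra hc
    push_neg at hc
    have hc' : 3 ≤ c := by omega
    nlinarith [mul_le_mul_of_nonneg_right hc' (show (0:ℤ) ≤ 2*(t+1)^2 by positivity)]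
  interval_cases c
  · rw [abs_of_nonneg (by nlinarith)]
    nlinarith
  · rcases le_or_gt d (t+1) with h1 | h1
    · rw [abs_of_nonpos (by nlinarith)]
      nlinarith
    · rw [abs_of_nonneg (by nlinarith)]
      nlinarith
  · rw [abs_of_nonpos (by nlinarith)]
    nlinarith

lemma classify_arith (t d e c : ℤ) (ht : 1 ≤ t) (he : e = d*(2*t+1) - c*(2*(t+1)^2))
    (hd : |d| ≤ 2*t) (hee : |e| ≤ 2*t) :
    (d = 0 ∧ e = 0) ∨ (d = t+1 ∧ e = -(t+1)) ∨ (d = t+2 ∧ e = t) ∨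
    (d = -(t+1) ∧ e = t+1) ∨ (d = -(t+2) ∧ e = -t) := by
  have hd' := abs_le.mp hd
  have he' := abs_le.mp hee
  have hc1 : c ≤ 1 := by
    by_contra hc
    push_neg at hc
    have hc' : 2 ≤ c := by omega
    nlinarith [mul_le_mul_of_nonneg_right hc' (show (0:ℤ) ≤ 2*(t+1)^2 by positivity)]
  have hc2 : -1 ≤ c := by
    by_contra hc
    push_neg at hc
    have hc' : c ≤ -2 := by omega
    nlinarith [mul_le_mul_of_nonneg_right hc' (show (0:ℤ) ≤ 2*(t+1)^2 by positivity)]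
  interval_cases c
  · right; right; right
    have hdneg : d ≤ -1 := by nlinarith
    have h1 : -(t+2) ≤ d := by nlinarith
    have h2 : d ≤ -(t+1) := by nlinarith
    have : d = -(t+1) ∨ d = -(t+2) := by omega
    rcases this with h | h
    · left; exact ⟨h, by rw [he, h]; ring⟩
    · right; exact ⟨h, by rw [he, h]; ring⟩
  · left
    have hd0 : d = 0 := by
      rcases lt_trichotomy d 0 with h | h | h
      · nlinarith
      · exact h
      · nlinarith
    exact ⟨hd0, by rw [he, hd0]; ring⟩
  · right
    have hdpos : 1 ≤ d := by nlinarith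
    have h1 : t+1 ≤ d := by nlinarith
    have h2 : d ≤ t+2 := by nlinarith
    have : d = t+1 ∨ d = t+2 := by omega
    rcases this with h | h
    · left; exact ⟨h, by rw [he, h]; ring⟩
    · right; left; exact ⟨h, by rw [he, h]; ring⟩

lemma strip_min {N n : ℕ} {e f : Fin N → Fin n} (hem : StrictMono e) (hfm : StrictMono f)
    {S : Finset (Fin n)} (hsurj : ∀ p : Fin n, p ∉ S → ∃ ρ, e ρ = p)
    {r₁ : Fin N} (hmin : ∀ ρ : Fin N, ρ < r₁ → e ρ = f ρ)
    {p : Fin n} (h1 : f r₁ ≤ p) (h2 : p < e r₁) : p ∈ S := by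
  by_contra hp
  obtain ⟨ρ, hρ⟩ := hsurj p hp
  have hlt : ρ < r₁ := hem.lt_iff_lt.mp (by rw [hρ]; exact h2)
  have heq := hmin ρ hlt
  have hcon : f ρ < f r₁ := hfm hlt
  rw [← heq, hρ] at hcon
  exact absurd h1 (not_le.mpr hcon)

lemma strip_max {N n : ℕ} {e f : Fin N → Fin n} (hem : StrictMono e) (hfm : StrictMono f)
    {S : Finset (Fin n)} (hsurj : ∀ p : Fin n, p ∉ S → ∃ ρ, e ρ = p)
    {r₂ : Fin N} (hmax : ∀ ρ : Fin N, r₂ < ρ → e ρ = f ρ)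
    {p : Fin n} (h1 : e r₂ < p) (h2 : p ≤ f r₂) : p ∈ S := by
  by_contra hp
  obtain ⟨ρ, hρ⟩ := hsurj p hp
  have hlt : r₂ < ρ := hem.lt_iff_lt.mp (by rw [hρ]; exact h1)
  have heq := hmax ρ hlt
  have hcon : f r₂ < f ρ := hfm hlt
  rw [← heq, hρ] at hcon
  exact absurd h2 (not_le.mpr hcon)

lemma compl_image {n : ℕ} (σ : Equiv.Perm (Fin n)) (S : Finset (Fin n)) :
    Sᶜ.image σ = (S.image σ)ᶜ := by
  ext x
  simp only [Finset.mem_compl, Finset.mem_image]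
  constructor
  · rintro ⟨a, ha, rfl⟩ ⟨b, hb, hba⟩
    exact ha (σ.injective hba ▸ hb)
  · intro hx
    refine ⟨σ.symm x, ?_, by simp⟩
    intro hmem
    exact hx ⟨σ.symm x, hmem, by simp⟩

/-- The abstract core of the prolificity argument. -/
lemma abstract_core
    (t N n : ℕ) (ht : 1 ≤ t) (hNn : N + 2*t = n)
    (σ : Equiv.Perm (Fin n))
    (hbr : ∀ i j : Fin n, i ≠ j → 2*t + 2 ≤ dperm σ i j)
    (hcong : ∀ i j : Fin n, ∃ c : ℤ,
      ((σ i : ℕ):ℤ) - ((σ j : ℕ):ℤ) = (((i:ℕ):ℤ) - ((j:ℕ):ℤ)) * (2*t+1) - c * (2*(t+1)^2))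
    (A B : Finset (Fin n)) (hA : A.card = 2*t) (hB : B.card = 2*t)
    (eA eB EA EB : Fin N → Fin n) (π : Equiv.Perm (Fin N))
    (heA : StrictMono eA) (heB : StrictMono eB) (hEA : StrictMono EA) (hEB : StrictMono EB)
    (hsA : ∀ p : Fin n, p ∉ A → ∃ ρ, eA ρ = p)
    (hsB : ∀ p : Fin n, p ∉ B → ∃ ρ, eB ρ = p)
    (hsEA : ∀ p : Fin n, p ∉ A.image σ → ∃ ρ, EA ρ = p)
    (hsEB : ∀ p : Fin n, p ∉ B.image σ → ∃ ρ, EB ρ = p)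
    (hpA : ∀ r, σ (eA r) = EA (π r))
    (hpB : ∀ r, σ (eB r) = EB (π r))
    (r₀ : Fin N) (hr₀ : (eB r₀ : ℕ) < (eA r₀ : ℕ)) : False := by
  classical
  -- classification of displacement vectors
  have hclass : ∀ r : Fin N,
      (((eA r : ℕ):ℤ) - ((eB r : ℕ):ℤ) = 0 ∧ ((σ (eA r) : ℕ):ℤ) - ((σ (eB r) : ℕ):ℤ) = 0) ∨
      (((eA r : ℕ):ℤ) - ((eB r : ℕ):ℤ) = t+1 ∧ ((σ (eA r) : ℕ):ℤ) - ((σ (eB r) : ℕ):ℤ) = -(t+1)) ∨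
      (((eA r : ℕ):ℤ) - ((eB r : ℕ):ℤ) = t+2 ∧ ((σ (eA r) : ℕ):ℤ) - ((σ (eB r) : ℕ):ℤ) = t) ∨
      (((eA r : ℕ):ℤ) - ((eB r : ℕ):ℤ) = -(t+1) ∧ ((σ (eA r) : ℕ):ℤ) - ((σ (eB r) : ℕ):ℤ) = t+1) ∨
      (((eA r : ℕ):ℤ) - ((eB r : ℕ):ℤ) = -(t+2) ∧ ((σ (eA r) : ℕ):ℤ) - ((σ (eB r) : ℕ):ℤ) = -t) := by
    intro r
    obtain ⟨c, hc⟩ := hcong (eA r) (eB r)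
    have b1 := sm_le heA r
    have b2 := sm_ub heA r
    have b3 := sm_le heB r
    have b4 := sm_ub heB r
    have b5 := sm_le hEA (π r)
    have b6 := sm_ub hEA (π r)
    have b7 := sm_le hEB (π r)
    have b8 := sm_ub hEB (π r)
    have h1 : |((eA r : ℕ):ℤ) - ((eB r : ℕ):ℤ)| ≤ 2*t := by
      rw [abs_le]; constructor <;> omega
    have h2 : |((σ (eA r) : ℕ):ℤ) - ((σ (eB r) : ℕ):ℤ)| ≤ 2*t := by
      rw [hpA r, hpB r, abs_le]; constructor <;> omega
    exact classify_arith (t:ℤ) _ _ c (by exact_mod_cast ht) hc h1 h2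
  have hmover_of_delta : ∀ r : Fin N, EA (π r) ≠ EB (π r) → eA r ≠ eB r := by
    intro r h heq
    exact h (by rw [← hpA r, ← hpB r, heq])
  -- Case on the type of the mover r₀
  have hzero : ∀ r : Fin N, ((eA r : ℕ):ℤ) - ((eB r : ℕ):ℤ) = 0 → eA r = eB r := by
    intro r h
    exact Fin.ext (by omega)
  rcases hclass r₀ with ⟨h1, _⟩ | ⟨hγ₀, hδ₀⟩ | ⟨hγ₀, hδ₀⟩ | ⟨h1, _⟩ | ⟨h1, _⟩
  · omega
  -- TYPE I : all movers (t+1, -(t+1))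
  · have hpin : ∀ r : Fin N, eA r ≠ eB r →
        ((eA r : ℕ):ℤ) - ((eB r : ℕ):ℤ) = t+1 ∧
        ((σ (eA r) : ℕ):ℤ) - ((σ (eB r) : ℕ):ℤ) = -(t+1) := by
      intro r hne
      rcases hclass r with ⟨h1, _⟩ | h | ⟨h1, h2⟩ | ⟨h1, h2⟩ | ⟨h1, h2⟩
      · exact absurd (hzero r h1) hne
      · exact h
      · exfalso
        have hs := sm_spread hEA hEB (π r) (π r₀)
        rw [← hpA r, ← hpB r, ← hpA r₀, ← hpB r₀] at hs
        omega
      · exfalso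
        have hs := sm_spread heA heB r₀ r
        omega
      · exfalso
        have hs := sm_spread heA heB r₀ r
        omega
    set NFs : Finset (Fin N) := Finset.univ.filter (fun r => eA r ≠ eB r) with hNFs
    have hNFne : NFs.Nonempty := by
      refine ⟨r₀, Finset.mem_filter.mpr ⟨Finset.mem_univ _, fun h => ?_⟩⟩
      rw [h] at hr₀; omega
    set r₂ := NFs.max' hNFne with hr₂def
    have hr₂mem : r₂ ∈ NFs := NFs.max'_mem hNFne
    have hr₂ne : eA r₂ ≠ eB r₂ := (Finset.mem_filter.mp hr₂mem).2
    have hmax : ∀ ρ : Fin N, r₂ < ρ → eB ρ = eA ρ := by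
      intro ρ hρ
      by_contra hne
      have hmem : ρ ∈ NFs := Finset.mem_filter.mpr ⟨Finset.mem_univ _, fun h => hne h.symm⟩
      exact absurd (NFs.le_max' ρ hmem) (not_le.mpr hρ)
    obtain ⟨hγ₂, hδ₂⟩ := hpin r₂ hr₂ne
    set NFv : Finset (Fin N) := Finset.univ.filter (fun j => EA j ≠ EB j) with hNFv
    have hNFvne : NFv.Nonempty := by
      refine ⟨π r₀, Finset.mem_filter.mpr ⟨Finset.mem_univ _, fun h => ?_⟩⟩
      rw [← hpA r₀, ← hpB r₀] at h
      rw [h] at hδ₀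
      omega
    set j₁ := NFv.min' hNFvne with hj₁def
    have hj₁mem : j₁ ∈ NFv := NFv.min'_mem hNFvne
    have hj₁ne : EA j₁ ≠ EB j₁ := (Finset.mem_filter.mp hj₁mem).2
    have hminv : ∀ jj : Fin N, jj < j₁ → EB jj = EA jj := by
      intro jj hjj
      by_contra hne
      have hmem : jj ∈ NFv := Finset.mem_filter.mpr ⟨Finset.mem_univ _, fun h => hne h.symm⟩
      exact absurd (NFv.min'_le jj hmem) (not_le.mpr hjj)
    have hΔj₁ : ((EB j₁ : ℕ):ℤ) = ((EA j₁ : ℕ):ℤ) + (t+1) := by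
      have hπr : π (π.symm j₁) = j₁ := Equiv.apply_symm_apply π j₁
      have hmov : eA (π.symm j₁) ≠ eB (π.symm j₁) :=
        hmover_of_delta _ (by rw [hπr]; exact hj₁ne)
      obtain ⟨_, hδ⟩ := hpin _ hmov
      rw [hpA, hpB, hπr] at hδ
      omega
    -- strips
    have hstripP : ∀ p : Fin n, eB r₂ < p → p ≤ eA r₂ → p ∈ B :=
      fun p h1 h2 => strip_max heB heA hsB hmax h1 h2
    have hstripV : ∀ v : Fin n, EA j₁ ≤ v → v < EB j₁ → v ∈ B.image σ :=
      fun v h1 h2 => strip_min hEB hEA hsEB hminv h1 h2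
    -- counting
    set P : Finset (Fin n) := Finset.Ioc (eB r₂) (eA r₂) with hP
    set V : Finset (Fin n) := (Finset.Ico (EA j₁) (EB j₁)).image (fun v => σ.symm v) with hV
    have hPB : P ⊆ B := by
      intro p hp
      rw [hP, Finset.mem_Ioc] at hp
      exact hstripP p hp.1 hp.2
    have hVB : V ⊆ B := by
      intro b hb
      rw [hV, Finset.mem_image] at hb
      obtain ⟨v, hv, rfl⟩ := hb
      rw [Finset.mem_Ico] at hv
      obtain ⟨b', hb', hbv⟩ := Finset.mem_image.mp (hstripV v hv.1 hv.2)
      have : σ.symm v = b' := by rw [← hbv]; simp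
      rw [this]; exact hb'
    have hPcard : P.card = t+1 := by
      rw [hP, Fin.card_Ioc]
      omega
    have hVcard : V.card = t+1 := by
      rw [hV, Finset.card_image_of_injective _ σ.symm.injective, Fin.card_Ico]
      omega
    have hinter : (P ∩ V).card ≤ 1 := by
      rw [Finset.card_le_one]
      intro x hx y hy
      by_contra hxy
      have hd := hbr x y hxy
      have hxP := (Finset.mem_inter.mp hx).1
      have hxV := (Finset.mem_inter.mp hx).2
      have hyP := (Finset.mem_inter.mp hy).1
      have hyV := (Finset.mem_inter.mp hy).2
      rw [hP, Finset.mem_Ioc] at hxP hyP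
      rw [hV, Finset.mem_image] at hxV hyV
      obtain ⟨vx, hvx, hvx2⟩ := hxV
      obtain ⟨vy, hvy, hvy2⟩ := hyV
      rw [Finset.mem_Ico] at hvx hvy
      have hσx : σ x = vx := by rw [← hvx2]; simp
      have hσy : σ y = vy := by rw [← hvy2]; simp
      have e1 : (eB r₂ : ℕ) < (x:ℕ) := hxP.1
      have e2 : (x:ℕ) ≤ (eA r₂ : ℕ) := hxP.2
      have e3 : (eB r₂ : ℕ) < (y:ℕ) := hyP.1
      have e4 : (y:ℕ) ≤ (eA r₂ : ℕ) := hyP.2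
      have f1 : (EA j₁ : ℕ) ≤ (vx:ℕ) := hvx.1
      have f2 : (vx:ℕ) < (EB j₁ : ℕ) := hvx.2
      have f3 : (EA j₁ : ℕ) ≤ (vy:ℕ) := hvy.1
      have f4 : (vy:ℕ) < (EB j₁ : ℕ) := hvy.2
      simp only [dperm, Nat.dist] at hd
      rw [hσx, hσy] at hd
      omega
    have hcard : (P ∪ V).card ≤ 2*t := by
      calc (P ∪ V).card ≤ B.card := Finset.card_le_card (Finset.union_subset hPB hVB)
        _ = 2*t := hB
    have hui := Finset.card_union_add_card_inter P V
    omega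
  -- TYPE II : all movers (t+2, t)
  · have hpin : ∀ r : Fin N, eA r ≠ eB r →
        ((eA r : ℕ):ℤ) - ((eB r : ℕ):ℤ) = t+2 ∧
        ((σ (eA r) : ℕ):ℤ) - ((σ (eB r) : ℕ):ℤ) = t := by
      intro r hne
      rcases hclass r with ⟨h1, _⟩ | ⟨h1, h2⟩ | h | ⟨h1, h2⟩ | ⟨h1, h2⟩
      · exact absurd (hzero r h1) hne
      · exfalso
        have hs := sm_spread hEA hEB (π r₀) (π r)
        rw [← hpA r, ← hpB r, ← hpA r₀, ← hpB r₀] at hs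
        omega
      · exact h
      · exfalso
        have hs := sm_spread heA heB r₀ r
        omega
      · exfalso
        have hs := sm_spread heA heB r₀ r
        omega
    set NFs : Finset (Fin N) := Finset.univ.filter (fun r => eA r ≠ eB r) with hNFs
    have hNFne : NFs.Nonempty := by
      refine ⟨r₀, Finset.mem_filter.mpr ⟨Finset.mem_univ _, fun h => ?_⟩⟩
      rw [h] at hr₀; omega
    set r₁ := NFs.min' hNFne with hr₁def
    have hr₁mem : r₁ ∈ NFs := NFs.min'_mem hNFne
    have hr₁ne : eA r₁ ≠ eB r₁ := (Finset.mem_filter.mp hr₁mem).2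
    have hmin : ∀ ρ : Fin N, ρ < r₁ → eA ρ = eB ρ := by
      intro ρ hρ
      by_contra hne
      have hmem : ρ ∈ NFs := Finset.mem_filter.mpr ⟨Finset.mem_univ _, hne⟩
      exact absurd (NFs.min'_le ρ hmem) (not_le.mpr hρ)
    obtain ⟨hγ₁, hδ₁⟩ := hpin r₁ hr₁ne
    set NFv : Finset (Fin N) := Finset.univ.filter (fun j => EA j ≠ EB j) with hNFv
    have hNFvne : NFv.Nonempty := by
      refine ⟨π r₀, Finset.mem_filter.mpr ⟨Finset.mem_univ _, fun h => ?_⟩⟩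
      rw [← hpA r₀, ← hpB r₀] at h
      rw [h] at hδ₀
      omega
    set j₁ := NFv.min' hNFvne with hj₁def
    have hj₁mem : j₁ ∈ NFv := NFv.min'_mem hNFvne
    have hj₁ne : EA j₁ ≠ EB j₁ := (Finset.mem_filter.mp hj₁mem).2
    have hminv : ∀ jj : Fin N, jj < j₁ → EA jj = EB jj := by
      intro jj hjj
      by_contra hne
      have hmem : jj ∈ NFv := Finset.mem_filter.mpr ⟨Finset.mem_univ _, hne⟩
      exact absurd (NFv.min'_le jj hmem) (not_le.mpr hjj)
    have hΔj₁ : ((EA j₁ : ℕ):ℤ) = ((EB j₁ : ℕ):ℤ) + t := by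
      have hπr : π (π.symm j₁) = j₁ := Equiv.apply_symm_apply π j₁
      have hmov : eA (π.symm j₁) ≠ eB (π.symm j₁) :=
        hmover_of_delta _ (by rw [hπr]; exact hj₁ne)
      obtain ⟨_, hδ⟩ := hpin _ hmov
      rw [hpA, hpB, hπr] at hδ
      omega
    -- strips
    have hstripP : ∀ p : Fin n, eB r₁ ≤ p → p < eA r₁ → p ∈ A :=
      fun p h1 h2 => strip_min heA heB hsA hmin h1 h2
    have hstripV : ∀ v : Fin n, EB j₁ ≤ v → v < EA j₁ → v ∈ A.image σ :=
      fun v h1 h2 => strip_min hEA hEB hsEA hminv h1 h2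
    -- counting
    set P : Finset (Fin n) := Finset.Ico (eB r₁) (eA r₁) with hP
    set V : Finset (Fin n) := (Finset.Ico (EB j₁) (EA j₁)).image (fun v => σ.symm v) with hV
    have hPA : P ⊆ A := by
      intro p hp
      rw [hP, Finset.mem_Ico] at hp
      exact hstripP p hp.1 hp.2
    have hVA : V ⊆ A := by
      intro b hb
      rw [hV, Finset.mem_image] at hb
      obtain ⟨v, hv, rfl⟩ := hb
      rw [Finset.mem_Ico] at hv
      obtain ⟨b', hb', hbv⟩ := Finset.mem_image.mp (hstripV v hv.1 hv.2)
      have : σ.symm v = b' := by rw [← hbv]; simp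
      rw [this]; exact hb'
    have hPcard : P.card = t+2 := by
      rw [hP, Fin.card_Ico]
      omega
    have hVcard : V.card = t := by
      rw [hV, Finset.card_image_of_injective _ σ.symm.injective, Fin.card_Ico]
      omega
    have hinter : (P ∩ V).card ≤ 1 := by
      rw [Finset.card_le_one]
      intro x hx y hy
      by_contra hxy
      have hd := hbr x y hxy
      have hxP := (Finset.mem_inter.mp hx).1
      have hxV := (Finset.mem_inter.mp hx).2
      have hyP := (Finset.mem_inter.mp hy).1
      have hyV := (Finset.mem_inter.mp hy).2
      rw [hP, Finset.mem_Ico] at hxP hyP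
      rw [hV, Finset.mem_image] at hxV hyV
      obtain ⟨vx, hvx, hvx2⟩ := hxV
      obtain ⟨vy, hvy, hvy2⟩ := hyV
      rw [Finset.mem_Ico] at hvx hvy
      have hσx : σ x = vx := by rw [← hvx2]; simp
      have hσy : σ y = vy := by rw [← hvy2]; simp
      have e1 : (eB r₁ : ℕ) ≤ (x:ℕ) := hxP.1
      have e2 : (x:ℕ) < (eA r₁ : ℕ) := hxP.2
      have e3 : (eB r₁ : ℕ) ≤ (y:ℕ) := hyP.1
      have e4 : (y:ℕ) < (eA r₁ : ℕ) := hyP.2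
      have f1 : (EB j₁ : ℕ) ≤ (vx:ℕ) := hvx.1
      have f2 : (vx:ℕ) < (EA j₁ : ℕ) := hvx.2
      have f3 : (EB j₁ : ℕ) ≤ (vy:ℕ) := hvy.1
      have f4 : (vy:ℕ) < (EA j₁ : ℕ) := hvy.2
      simp only [dperm, Nat.dist] at hd
      rw [hσx, hσy] at hd
      omega
    have hcard : (P ∪ V).card ≤ 2*t := by
      calc (P ∪ V).card ≤ A.card := Finset.card_le_card (Finset.union_subset hPA hVA)
        _ = 2*t := hA
    have hui := Finset.card_union_add_card_inter P V
    omega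
  · omega
  · omega

/-- For even `k` and `m = k²/2 + 2k + 1`, the permutation `σ_k` of `{1, …, m}` given by
`σ_k(i) = i(k+1) mod (m+1)` has breadth at least `k + 2`, and is therefore a `k`-prolific
permutation of size `k²/2 + 2k + 1`. -/
theorem sigma_even_prolific (k : ℕ) (hk : 2 ≤ k) (heven : Even k)
    (σ : Equiv.Perm (Fin (k ^ 2 / 2 + 2 * k + 1)))
    (hσ : ∀ i : Fin (k ^ 2 / 2 + 2 * k + 1),
      (σ i : ℕ) + 1 = (((i : ℕ) + 1) * (k + 1)) % (k ^ 2 / 2 + 2 * k + 1 + 1)) :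
    (∀ i j : Fin (k ^ 2 / 2 + 2 * k + 1), i ≠ j → k + 2 ≤ dperm σ i j) ∧
    IsProlific k σ := by
  classical
  obtain ⟨t, hkt⟩ := heven
  have hkt' : k = 2*t := by omega
  have ht : 1 ≤ t := by omega
  have hsq : k^2 = 4*t^2 := by rw [hkt']; ring
  obtain ⟨T, hT⟩ : ∃ T, t^2 = T := ⟨_, rfl⟩
  have h4 : 4*t^2 = 2*(2*t^2) := by ring
  have hdiv : k^2/2 = 2*t^2 := by
    rw [hsq, h4, Nat.mul_div_cancel_left _ (by norm_num : 0 < (2:ℕ))]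
  have hn2 : k ^ 2 / 2 + 2 * k + 1 = 2*T + 4*t + 1 := by
    rw [hdiv, hkt', hT]; ring
  have hTZ : ((T:ℕ):ℤ) = ((t:ℕ):ℤ)^2 := by rw [← hT]; push_cast; ring
  -- congruence fact
  have hcong : ∀ i j : Fin (k ^ 2 / 2 + 2 * k + 1), ∃ c : ℤ,
      ((σ i : ℕ):ℤ) - ((σ j : ℕ):ℤ)
        = (((i:ℕ):ℤ) - ((j:ℕ):ℤ)) * (2*(t:ℤ)+1) - c * (2*((t:ℤ)+1)^2) := by
    intro i j
    have h1 := hσ i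
    have h2 := hσ j
    have hM : ((k ^ 2 / 2 + 2 * k + 1 : ℕ):ℤ) + 1 = 2*((t:ℤ)+1)^2 := by
      rw [hn2]
      push_cast
      rw [hTZ]
      ring
    have hk1 : ((k:ℕ):ℤ) + 1 = 2*(t:ℤ)+1 := by rw [hkt']; push_cast; ring
    refine ⟨((((i : ℕ) + 1) * (k + 1)) / (k ^ 2 / 2 + 2 * k + 1 + 1) : ℕ)
      - ((((j : ℕ) + 1) * (k + 1)) / (k ^ 2 / 2 + 2 * k + 1 + 1) : ℕ), ?_⟩
    have e1 : (σ i : ℕ) + 1 + (k ^ 2 / 2 + 2 * k + 1 + 1)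
        * ((((i:ℕ)+1)*(k+1))/(k ^ 2 / 2 + 2 * k + 1 + 1)) = ((i:ℕ)+1)*(k+1) := by
      rw [h1]; exact Nat.mod_add_div _ _
    have e2 : (σ j : ℕ) + 1 + (k ^ 2 / 2 + 2 * k + 1 + 1)
        * ((((j:ℕ)+1)*(k+1))/(k ^ 2 / 2 + 2 * k + 1 + 1)) = ((j:ℕ)+1)*(k+1) := by
      rw [h2]; exact Nat.mod_add_div _ _
    have e1' := congrArg (fun x : ℕ => (x:ℤ)) e1
    have e2' := congrArg (fun x : ℕ => (x:ℤ)) e2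
    push_cast at e1' e2'
    rw [← hk1, ← hM]
    push_cast
    linear_combination e1' - e2'
  -- Part 1 : breadth bound
  have hbr : ∀ i j : Fin (k ^ 2 / 2 + 2 * k + 1), i ≠ j → k + 2 ≤ dperm σ i j := by
    have H : ∀ i j : Fin (k ^ 2 / 2 + 2 * k + 1), (j:ℕ) < (i:ℕ) → k + 2 ≤ dperm σ i j := by
      intro i j hlt
      obtain ⟨c, hc⟩ := hcong i j
      have hile : (i:ℕ) < 2*T + 4*t + 1 := lt_of_lt_of_eq i.isLt hn2
      have hjle : (j:ℕ) < 2*T + 4*t + 1 := lt_of_lt_of_eq j.isLt hn2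
      have hsile : ((σ i : Fin _):ℕ) < 2*T + 4*t + 1 := lt_of_lt_of_eq (σ i).isLt hn2
      have hsjle : ((σ j : Fin _):ℕ) < 2*T + 4*t + 1 := lt_of_lt_of_eq (σ j).isLt hn2
      have hd1 : (1:ℤ) ≤ ((i:ℕ):ℤ) - ((j:ℕ):ℤ) := by push_cast; omega
      have hd2 : ((i:ℕ):ℤ) - ((j:ℕ):ℤ) ≤ 2*((t:ℕ):ℤ)^2+4*((t:ℕ):ℤ) := by
        rw [← hTZ]; push_cast; omega
      have he2 : |((σ i : ℕ):ℤ) - ((σ j : ℕ):ℤ)| ≤ 2*((t:ℕ):ℤ)^2+4*((t:ℕ):ℤ) := by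
        rw [abs_le, ← hTZ]
        constructor <;> (push_cast; omega)
      have harith := breadth_arith (t:ℤ) (((i:ℕ):ℤ) - ((j:ℕ):ℤ))
        (((σ i : ℕ):ℤ) - ((σ j : ℕ):ℤ)) c (by exact_mod_cast ht) hc hd1 hd2 he2
      simp only [dperm]
      zify
      rw [natdist_cast, natdist_cast]
      have h1 : |((i:ℕ):ℤ) - ((j:ℕ):ℤ)| = ((i:ℕ):ℤ) - ((j:ℕ):ℤ) := by
        rw [abs_of_nonneg]; omega
      rw [h1]
      have hk2t : ((k:ℕ):ℤ) = 2*((t:ℕ):ℤ) := by rw [hkt']; push_cast; ring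
      linarith [harith]
    intro i j hij
    rcases Nat.lt_or_ge (i:ℕ) (j:ℕ) with h | h
    · have := H j i h
      simp only [dperm] at this ⊢
      rw [Nat.dist_comm, Nat.dist_comm ((σ j : Fin (k ^ 2 / 2 + 2 * k + 1)) : ℕ)] at this
      exact this
    · have hlt : (j:ℕ) < (i:ℕ) := by
        rcases Nat.lt_or_ge (j:ℕ) (i:ℕ) with h' | h'
        · exact h'
        · exact absurd (Fin.ext (by omega : (i:ℕ) = (j:ℕ))) hij
      exact H i j hlt
  refine ⟨hbr, ?_⟩
  -- Part 2 : prolific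
  intro A B hA hB hAB hpe
  obtain ⟨m', hcA, hcB, hpat⟩ := hpe
  have hNn : m' + 2*t = k ^ 2 / 2 + 2 * k + 1 := by
    have hcc := Finset.card_add_card_compl A
    rw [hA, hcA, Fintype.card_fin] at hcc
    omega
  have hiA : (Aᶜ.image σ).card = m' := by
    rw [Finset.card_image_of_injective _ σ.injective, hcA]
  have hiB : (Bᶜ.image σ).card = m' := by
    rw [Finset.card_image_of_injective _ σ.injective, hcB]
  set eA : Fin m' → Fin (k ^ 2 / 2 + 2 * k + 1) :=
    fun r => ((Aᶜ.orderIsoOfFin hcA) r : Fin (k ^ 2 / 2 + 2 * k + 1)) with heAdef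
  set eB : Fin m' → Fin (k ^ 2 / 2 + 2 * k + 1) :=
    fun r => ((Bᶜ.orderIsoOfFin hcB) r : Fin (k ^ 2 / 2 + 2 * k + 1)) with heBdef
  set EA : Fin m' → Fin (k ^ 2 / 2 + 2 * k + 1) :=
    fun j => (((Aᶜ.image σ).orderIsoOfFin hiA) j : Fin (k ^ 2 / 2 + 2 * k + 1)) with hEAdef
  set EB : Fin m' → Fin (k ^ 2 / 2 + 2 * k + 1) :=
    fun j => (((Bᶜ.image σ).orderIsoOfFin hiB) j : Fin (k ^ 2 / 2 + 2 * k + 1)) with hEBdef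
  have heA : StrictMono eA :=
    fun a b h => Subtype.coe_lt_coe.mpr ((Aᶜ.orderIsoOfFin hcA).strictMono h)
  have heB : StrictMono eB :=
    fun a b h => Subtype.coe_lt_coe.mpr ((Bᶜ.orderIsoOfFin hcB).strictMono h)
  have hEA : StrictMono EA :=
    fun a b h => Subtype.coe_lt_coe.mpr (((Aᶜ.image σ).orderIsoOfFin hiA).strictMono h)
  have hEB : StrictMono EB :=
    fun a b h => Subtype.coe_lt_coe.mpr (((Bᶜ.image σ).orderIsoOfFin hiB).strictMono h)
  have hsA : ∀ p, p ∉ A → ∃ ρ, eA ρ = p := by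
    intro p hp
    refine ⟨(Aᶜ.orderIsoOfFin hcA).symm ⟨p, Finset.mem_compl.mpr hp⟩, ?_⟩
    simp only [heAdef]
    simp
  have hsB : ∀ p, p ∉ B → ∃ ρ, eB ρ = p := by
    intro p hp
    refine ⟨(Bᶜ.orderIsoOfFin hcB).symm ⟨p, Finset.mem_compl.mpr hp⟩, ?_⟩
    simp only [heBdef]
    simp
  have hsEA : ∀ p, p ∉ A.image σ → ∃ ρ, EA ρ = p := by
    intro p hp
    have hp' : p ∈ Aᶜ.image σ := by
      rw [compl_image]
      exact Finset.mem_compl.mpr hp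
    refine ⟨((Aᶜ.image σ).orderIsoOfFin hiA).symm ⟨p, hp'⟩, ?_⟩
    simp only [hEAdef]
    simp
  have hsEB : ∀ p, p ∉ B.image σ → ∃ ρ, EB ρ = p := by
    intro p hp
    have hp' : p ∈ Bᶜ.image σ := by
      rw [compl_image]
      exact Finset.mem_compl.mpr hp
    refine ⟨((Bᶜ.image σ).orderIsoOfFin hiB).symm ⟨p, hp'⟩, ?_⟩
    simp only [hEBdef]
    simp
  have hpatA : ∀ r, σ (eA r) = EA (pattern σ A hcA r) := by
    intro r
    simp only [heAdef, hEAdef]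
    simp only [pattern, Equiv.trans_apply]
    rw [show ((Aᶜ.image σ).orderIsoOfFin
        (by rw [Finset.card_image_of_injective _ σ.injective, hcA] : (Aᶜ.image σ).card = m'))
        = (Aᶜ.image σ).orderIsoOfFin hiA from rfl]
    simp [Equiv.subtypeEquiv_apply]
  have hpatB : ∀ r, σ (eB r) = EB (pattern σ A hcA r) := by
    intro r
    rw [hpat]
    simp only [heBdef, hEBdef]
    simp only [pattern, Equiv.trans_apply]
    rw [show ((Bᶜ.image σ).orderIsoOfFin
        (by rw [Finset.card_image_of_injective _ σ.injective, hcB] : (Bᶜ.image σ).card = m'))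
        = (Bᶜ.image σ).orderIsoOfFin hiB from rfl]
    simp [Equiv.subtypeEquiv_apply]
  -- some mover exists
  have hex : ∃ r : Fin m', eA r ≠ eB r := by
    by_contra hno
    push_neg at hno
    apply hAB
    apply compl_injective
    apply Finset.ext
    intro x
    constructor
    · intro hx
      have h := hno ((Aᶜ.orderIsoOfFin hcA).symm ⟨x, hx⟩)
      have hval : eA ((Aᶜ.orderIsoOfFin hcA).symm ⟨x, hx⟩) = x := by
        simp only [heAdef]; simp
      rw [hval] at h
      have hmem : eB ((Aᶜ.orderIsoOfFin hcA).symm ⟨x, hx⟩) ∈ Bᶜ :=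
        ((Bᶜ.orderIsoOfFin hcB) _).prop
      rw [← h] at hmem
      exact hmem
    · intro hx
      have h := hno ((Bᶜ.orderIsoOfFin hcB).symm ⟨x, hx⟩)
      have hval : eB ((Bᶜ.orderIsoOfFin hcB).symm ⟨x, hx⟩) = x := by
        simp only [heBdef]; simp
      rw [hval] at h
      have hmem : eA ((Bᶜ.orderIsoOfFin hcB).symm ⟨x, hx⟩) ∈ Aᶜ :=
        ((Aᶜ.orderIsoOfFin hcA) _).prop
      rw [h] at hmem
      exact hmem
  obtain ⟨r, hr⟩ := hex
  have hbr' : ∀ i j : Fin (k ^ 2 / 2 + 2 * k + 1), i ≠ j → 2*t + 2 ≤ dperm σ i j := by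
    intro i j hij
    have := hbr i j hij
    omega
  have hA' : A.card = 2*t := by rw [hA, hkt']
  have hB' : B.card = 2*t := by rw [hB, hkt']
  rcases Nat.lt_or_ge ((eB r : Fin (k ^ 2 / 2 + 2 * k + 1)) : ℕ)
      ((eA r : Fin (k ^ 2 / 2 + 2 * k + 1)) : ℕ) with hlt | hge
  · exact abstract_core t m' (k ^ 2 / 2 + 2 * k + 1) ht hNn σ hbr' hcong A B hA' hB'
      eA eB EA EB (pattern σ A hcA) heA heB hEA hEB hsA hsB hsEA hsEB hpatA hpatB r hlt
  · have hlt' : ((eA r : Fin (k ^ 2 / 2 + 2 * k + 1)) : ℕ)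
        < ((eB r : Fin (k ^ 2 / 2 + 2 * k + 1)) : ℕ) := by
      rcases Nat.lt_or_ge ((eA r : Fin (k ^ 2 / 2 + 2 * k + 1)) : ℕ)
          ((eB r : Fin (k ^ 2 / 2 + 2 * k + 1)) : ℕ) with h' | h'
      · exact h'
      · exact absurd (Fin.ext (by omega :
            ((eA r : Fin (k ^ 2 / 2 + 2 * k + 1)) : ℕ) = ((eB r : Fin (k ^ 2 / 2 + 2 * k + 1)) : ℕ))) hr
    exact abstract_core t m' (k ^ 2 / 2 + 2 * k + 1) ht hNn σ hbr' hcong B A hB' hA'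
      eB eA EB EA (pattern σ A hcA) heB heA hEB hEA hsB hsA hsEB hsEA hpatB hpatA r hlt'

end Prolific
end
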